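/- Let G = Circ(n, S) with n ≥ 2 and S ⊆ {1, …, ⌊n/2⌋} nonempty. Then G is a nut graph if and only if all of the following hold: (i) n is even; (ii) S consists of exactly t odd and t even integers from {1, 2, …, n/2 − 1} for some t ≥ 1; and (iii) P(ω^j) ≠ 0 for each j ∈ {1, 2, …, n/2 − 1}, where ω = e^{2πi/n} and P(x) = Σ_{s ∈ S} (x^s + x^{n−s}). -/

import Mathlib

open Classical in
/-- The adjacency matrix of a simple graph over `ℚ`. -/
noncomputable def adjMatrixQ {V : Type*} [Fintype V] (G : SimpleGraph V) : Matrix V V ℚ :=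
  Matrix.of fun i j => if G.Adj i j then 1 else 0

/-- A nut graph: a simple graph on at least one vertex whose rational adjacency matrix has
nullity one, and some vector in its kernel has all entries nonzero. -/
def IsNutGraph {V : Type*} [Fintype V] (G : SimpleGraph V) : Prop :=
  Nonempty V ∧
    Module.finrank ℚ (LinearMap.ker (adjMatrixQ G).mulVecLin) = 1 ∧
    ∃ v : V → ℚ, (adjMatrixQ G).mulVec v = 0 ∧ ∀ i, v i ≠ 0

/-- The circulant graph `Circ(n, S)`: vertices `ZMod n`, distinct `i, j` adjacent iff
`(i - j) mod n` or `(j - i) mod n` belongs to `S`. -/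
def circulantGraph (n : ℕ) (S : Finset ℕ) : SimpleGraph (ZMod n) where
  Adj i j := i ≠ j ∧ ((i - j).val ∈ S ∨ (j - i).val ∈ S)
  symm := ⟨fun _ _ h => ⟨h.1.symm, h.2.symm⟩⟩
  loopless := ⟨fun _ h => h.1 rfl⟩


open ZMod AddChar Finset Matrix

namespace CircNutAux

variable {n : ℕ} [NeZero n]

/-- primitive root -/
noncomputable def om (n : ℕ) : ℂ := Complex.exp (2 * (Real.pi : ℂ) * Complex.I / (n : ℂ))

/-- circulant symbol over ℚ -/
noncomputable def cf (n : ℕ) [NeZero n] (S : Finset ℕ) (m : ZMod n) : ℚ :=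
  if m.val ∈ S ∨ (-m).val ∈ S then 1 else 0

/-- symbol over ℂ -/
noncomputable def cC (n : ℕ) [NeZero n] (S : Finset ℕ) : ZMod n → ℂ :=
  fun m => ((cf n S m : ℚ) : ℂ)

noncomputable def castC (x : ZMod n → ℚ) : ZMod n → ℂ := fun j => ((x j : ℚ) : ℂ)

/-- eigenvalue function -/
noncomputable def FT (n : ℕ) [NeZero n] (S : Finset ℕ) : ZMod n → ℂ :=
  ZMod.dft (cC n S)

/-- character vector -/
noncomputable def chi (n : ℕ) [NeZero n] (t : ZMod n) : ZMod n → ℂ :=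
  fun i => ZMod.stdAddChar (t * i)

lemma psi_nat (m : ℕ) : (ZMod.stdAddChar ((m : ZMod n))) = om n ^ m := by
  have h1 : (((m : ℤ)) : ZMod n) = ((m : ℕ) : ZMod n) := by push_cast; ring
  rw [← h1, ZMod.stdAddChar_coe, om, ← Complex.exp_nat_mul]
  congr 1
  push_cast
  ring

lemma charSum (t : ZMod n) :
    ∑ j : ZMod n, ZMod.stdAddChar (t * j) = if t = 0 then (n : ℂ) else 0 := by
  split_ifs with h
  · subst h
    simp [AddChar.map_zero_eq_one, Finset.card_univ, ZMod.card]
  · exact AddChar.sum_eq_zero_of_ne_one (ZMod.isPrimitive_stdAddChar n h)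

lemma dft_conv (φ ξ : ZMod n → ℂ) :
    ZMod.dft (fun i => ∑ j : ZMod n, φ (i - j) * ξ j) =
      fun k => ZMod.dft φ k * ZMod.dft ξ k := by
  funext k
  conv_lhs =>
    rw [ZMod.dft_apply]
    simp only [smul_eq_mul, Finset.mul_sum]
    rw [Finset.sum_comm]
  conv_rhs =>
    rw [ZMod.dft_apply, ZMod.dft_apply]
    simp only [smul_eq_mul]
    rw [Finset.sum_mul_sum]
    rw [Finset.sum_comm]
  refine Finset.sum_congr rfl fun j _ => ?_
  refine (Equiv.sum_comp (Equiv.addRight j)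
    (fun i => ZMod.stdAddChar (-(i * k)) * (φ (i - j) * ξ j))).symm.trans ?_
  refine Finset.sum_congr rfl fun m _ => ?_
  simp only [Equiv.coe_addRight, add_sub_cancel_right]
  have h1 : -((m + j) * k) = -(m * k) + -(j * k) := by ring
  rw [h1, AddChar.map_add_eq_mul]
  ring

lemma dft_chi (t : ZMod n) :
    ZMod.dft (chi n t) = fun k => if k = t then (n : ℂ) else 0 := by
  funext k
  rw [ZMod.dft_apply]
  simp only [smul_eq_mul, chi]
  have h1 : ∀ j : ZMod n,
      ZMod.stdAddChar (-(j * k)) * ZMod.stdAddChar (t * j) =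
        ZMod.stdAddChar ((t - k) * j) := by
    intro j
    rw [← AddChar.map_add_eq_mul]
    congr 1
    ring
  simp only [h1]
  rw [charSum]
  have : t - k = 0 ↔ k = t := by rw [sub_eq_zero, eq_comm]
  simp [this]



lemma FT_def (S : Finset ℕ) (k : ZMod n) : FT n S k = ZMod.dft (cC n S) k := rfl

lemma adj_eq (S : Finset ℕ) (h0 : 0 ∉ S) (i j : ZMod n) :
    adjMatrixQ (circulantGraph n S) i j = cf n S (i - j) := by
  classical
  by_cases hij : i = j
  · subst hij
    simp [adjMatrixQ, circulantGraph, cf, ZMod.val_zero, h0]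
  · have h1 : (circulantGraph n S).Adj i j ↔ ((i - j).val ∈ S ∨ (-(i - j)).val ∈ S) := by
      simp [circulantGraph, hij, neg_sub]
    simp only [adjMatrixQ, Matrix.of_apply, cf]
    rw [if_congr h1 rfl rfl]

lemma mulVec_eq (S : Finset ℕ) (h0 : 0 ∉ S) (x : ZMod n → ℚ) (i : ZMod n) :
    (adjMatrixQ (circulantGraph n S) *ᵥ x) i = ∑ j : ZMod n, cf n S (i - j) * x j := by
  simp [Matrix.mulVec, dotProduct, adj_eq S h0]

lemma ker_iff (S : Finset ℕ) (h0 : 0 ∉ S) (x : ZMod n → ℚ) :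
    adjMatrixQ (circulantGraph n S) *ᵥ x = 0 ↔
      ∀ k : ZMod n, FT n S k * ZMod.dft (castC x) k = 0 := by
  have hcast : castC (adjMatrixQ (circulantGraph n S) *ᵥ x) =
      fun i => ∑ j : ZMod n, cC n S (i - j) * castC x j := by
    funext i
    rw [castC, mulVec_eq S h0]
    push_cast [cC, castC]
    rfl
  have hconv := dft_conv (cC n S) (castC x)
  constructor
  · intro h k
    have h2 : (fun i => ∑ j : ZMod n, cC n S (i - j) * castC x j) = 0 := by
      rw [← hcast, h]
      funext i
      simp [castC]
    rw [FT_def, ← congrFun hconv k, h2]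
    simp
  · intro h
    have h2 : ZMod.dft (fun i => ∑ j : ZMod n, cC n S (i - j) * castC x j) = 0 := by
      rw [hconv]
      funext k
      exact h k
    have h3 : (fun i => ∑ j : ZMod n, cC n S (i - j) * castC x j) = 0 :=
      (LinearEquiv.map_eq_zero_iff ZMod.dft).1 h2
    rw [← hcast] at h3
    funext i
    have h4 := congrFun h3 i
    simp only [castC, Pi.zero_apply, Rat.cast_eq_zero] at h4
    exact h4

lemma chi_ker (S : Finset ℕ) (h0 : 0 ∉ S) (t : ZMod n) (h : FT n S t = 0) :
    ((adjMatrixQ (circulantGraph n S)).map (Rat.cast : ℚ → ℂ)) *ᵥ chi n t = 0 := by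
  have hB : ((adjMatrixQ (circulantGraph n S)).map (Rat.cast : ℚ → ℂ)) *ᵥ chi n t =
      fun i => ∑ j : ZMod n, cC n S (i - j) * chi n t j := by
    funext i
    simp [Matrix.mulVec, dotProduct, Matrix.map_apply, adj_eq S h0, cC]
  rw [hB]
  have h2 : ZMod.dft (fun i => ∑ j : ZMod n, cC n S (i - j) * chi n t j) = 0 := by
    rw [dft_conv]
    funext k
    simp only [Pi.zero_apply, dft_chi, ← FT_def]
    by_cases hk : k = t
    · subst hk
      rw [h]
      ring
    · simp [hk]
  exact (LinearEquiv.map_eq_zero_iff ZMod.dft).1 h2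



lemma om_half (hev : 2 * (n / 2) = n) : om n ^ (n / 2) = -1 := by
  have hn0 : (n : ℂ) ≠ 0 := Nat.cast_ne_zero.2 (NeZero.ne n)
  have h2 : 2 * ((n / 2 : ℕ) : ℂ) = (n : ℂ) := by exact_mod_cast congrArg (Nat.cast : ℕ → ℂ) hev
  rw [om, ← Complex.exp_nat_mul, ← Complex.exp_pi_mul_I]
  congr 1
  field_simp
  linear_combination h2

lemma chi_kappa (hev : 2 * (n / 2) = n) (i : ZMod n) :
    chi n ((n / 2 : ℕ) : ZMod n) i = (-1 : ℂ) ^ i.val := by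
  rw [chi]
  have h1 : ((n / 2 : ℕ) : ZMod n) * i = (((n / 2) * i.val : ℕ) : ZMod n) := by
    push_cast
    rw [ZMod.natCast_rightInverse i]
  rw [h1, psi_nat, pow_mul, om_half hev]

lemma kappa_opp (hev : 2 * (n / 2) = n) :
    -(((n / 2 : ℕ) : ZMod n)) = ((n / 2 : ℕ) : ZMod n) := by
  have h1 : (((n / 2 : ℕ) : ZMod n)) + (((n / 2 : ℕ) : ZMod n)) = 0 := by
    rw [← Nat.cast_add]
    rw [show n / 2 + n / 2 = n by omega]
    exact ZMod.natCast_self n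
  linear_combination -h1

lemma FT_kappa (S : Finset ℕ) (hev : 2 * (n / 2) = n) :
    FT n S (((n / 2 : ℕ) : ZMod n)) =
      ((∑ m : ZMod n, cf n S m * (-1 : ℚ) ^ m.val : ℚ) : ℂ) := by
  rw [FT_def, ZMod.dft_apply]
  push_cast
  refine Finset.sum_congr rfl fun m _ => ?_
  have h1 : -(m * ((n / 2 : ℕ) : ZMod n)) = ((n / 2 : ℕ) : ZMod n) * m := by
    rw [mul_comm]
    nth_rewrite 1 [← kappa_opp hev]
    ring
  rw [smul_eq_mul, h1,
    show ZMod.stdAddChar ((((n / 2 : ℕ) : ZMod n)) * m) = (-1 : ℂ) ^ m.val from chi_kappa hev m]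
  simp only [cC]
  push_cast
  ring

lemma FT_neg (S : Finset ℕ) (a : ZMod n) : FT n S (-a) = FT n S a := by
  have hcf : (fun j : ZMod n => cC n S (-j)) = cC n S := by
    funext j
    simp only [cC, cf, neg_neg]
    rw [if_congr (or_comm (a := (-j).val ∈ S)) rfl rfl]
  have h := congrFun (ZMod.dft_comp_neg (cC n S)) a
  rw [hcf] at h
  rw [FT_def, FT_def, ← h]

lemma FT_zero (S : Finset ℕ) :
    FT n S 0 = ((∑ m : ZMod n, cf n S m : ℚ) : ℂ) := by
  rw [FT_def, ZMod.dft_apply_zero]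
  push_cast [cC]
  rfl

lemma cf_nonneg (S : Finset ℕ) (m : ZMod n) : 0 ≤ cf n S m := by
  rw [cf]; split_ifs <;> norm_num

lemma FT_zero_ne (S : Finset ℕ) (hSne : S.Nonempty) (hlt : ∀ s ∈ S, s < n) :
    FT n S 0 ≠ 0 := by
  obtain ⟨s₀, hs₀⟩ := hSne
  have h1 : cf n S ((s₀ : ZMod n)) = 1 := by
    rw [cf, if_pos]
    left
    rwa [ZMod.val_natCast_of_lt (hlt s₀ hs₀)]
  have h2 : (1 : ℚ) ≤ ∑ m : ZMod n, cf n S m := by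
    rw [← h1]
    exact Finset.single_le_sum (fun m _ => cf_nonneg S m) (Finset.mem_univ _)
  rw [FT_zero]
  intro hc
  have h3 : (∑ m : ZMod n, cf n S m) = 0 := by exact_mod_cast hc
  linarith



lemma FT_eq_sum_T (S : Finset ℕ) (k : ZMod n) :
    FT n S k = ∑ m ∈ Finset.univ.filter (fun m : ZMod n => m.val ∈ S ∨ (-m).val ∈ S),
      ZMod.stdAddChar (-(m * k)) := by
  classical
  rw [FT_def, ZMod.dft_apply, Finset.sum_filter]
  refine Finset.sum_congr rfl fun m _ => ?_
  simp only [cC, cf, smul_eq_mul]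
  split_ifs <;> simp

lemma filter_eq_union (S : Finset ℕ) (hlt : ∀ s ∈ S, s < n) :
    Finset.univ.filter (fun m : ZMod n => m.val ∈ S ∨ (-m).val ∈ S) =
      S.image (fun s : ℕ => (s : ZMod n)) ∪ S.image (fun s : ℕ => -(s : ZMod n)) := by
  classical
  ext m
  simp only [Finset.mem_filter, Finset.mem_univ, true_and, Finset.mem_union, Finset.mem_image]
  constructor
  · rintro (h | h)
    · exact Or.inl ⟨m.val, h, ZMod.natCast_rightInverse m⟩
    · refine Or.inr ⟨(-m).val, h, ?_⟩
      rw [ZMod.natCast_rightInverse (-m), neg_neg]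
  · rintro (⟨s, hs, rfl⟩ | ⟨s, hs, rfl⟩)
    · left
      rwa [ZMod.val_natCast_of_lt (hlt s hs)]
    · right
      rwa [neg_neg, ZMod.val_natCast_of_lt (hlt s hs)]

lemma cast_inj_on (S : Finset ℕ) (hlt : ∀ s ∈ S, s < n) :
    ∀ a ∈ S, ∀ b ∈ S, (a : ZMod n) = (b : ZMod n) → a = b := by
  intro a ha b hb h
  have := congrArg ZMod.val h
  rwa [ZMod.val_natCast_of_lt (hlt a ha), ZMod.val_natCast_of_lt (hlt b hb)] at this

lemma sum_image_cast {M : Type*} [AddCommMonoid M] (S : Finset ℕ) (hlt : ∀ s ∈ S, s < n)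
    (f : ZMod n → M) :
    ∑ m ∈ S.image (fun s : ℕ => (s : ZMod n)), f m = ∑ s ∈ S, f ((s : ZMod n)) :=
  Finset.sum_image (cast_inj_on S hlt)

lemma sum_image_negcast {M : Type*} [AddCommMonoid M] (S : Finset ℕ) (hlt : ∀ s ∈ S, s < n)
    (f : ZMod n → M) :
    ∑ m ∈ S.image (fun s : ℕ => -(s : ZMod n)), f m = ∑ s ∈ S, f (-(s : ZMod n)) :=
  Finset.sum_image (fun a ha b hb h => cast_inj_on S hlt a ha b hb (neg_inj.1 h))

lemma inter_eq (S : Finset ℕ) (hn : 2 ≤ n) (hlt : ∀ s ∈ S, 1 ≤ s ∧ s ≤ n / 2) :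
    (S.image (fun s : ℕ => (s : ZMod n)) ∩ S.image (fun s : ℕ => -(s : ZMod n))) =
      if n / 2 ∈ S ∧ 2 * (n / 2) = n then {((n / 2 : ℕ) : ZMod n)} else ∅ := by
  classical
  have key : ∀ m : ZMod n, m ∈ (S.image (fun s : ℕ => (s : ZMod n)) ∩ S.image (fun s : ℕ => -(s : ZMod n))) →
      (n / 2 ∈ S ∧ 2 * (n / 2) = n ∧ m = ((n / 2 : ℕ) : ZMod n)) := by
    intro m hm
    rw [Finset.mem_inter, Finset.mem_image, Finset.mem_image] at hm
    obtain ⟨⟨s, hs, hseq⟩, ⟨s', hs', heq⟩⟩ := hm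
    have hz : ((s + s' : ℕ) : ZMod n) = 0 := by
      push_cast
      rw [hseq]
      linear_combination -heq
    have hdvd : n ∣ s + s' := (ZMod.natCast_eq_zero_iff _ _).1 hz
    have hb1 := hlt s hs
    have hb2 := hlt s' hs'
    have hge : n ≤ s + s' := Nat.le_of_dvd (by omega) hdvd
    have hsn : s = n / 2 ∧ s' = n / 2 ∧ 2 * (n / 2) = n := by omega
    refine ⟨hsn.1 ▸ hs, hsn.2.2, ?_⟩
    rw [← hseq, hsn.1]
  ext m
  split_ifs with h
  · simp only [Finset.mem_singleton]
    constructor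
    · intro hm
      exact (key m hm).2.2
    · rintro rfl
      rw [Finset.mem_inter, Finset.mem_image, Finset.mem_image]
      exact ⟨⟨n / 2, h.1, rfl⟩, ⟨n / 2, h.1, kappa_opp h.2⟩⟩
  · simp only [Finset.notMem_empty, iff_false]
    intro hm
    obtain ⟨h1, h2, _⟩ := key m hm
    exact h ⟨h1, h2⟩

lemma FT_apply_nat (S : Finset ℕ) (hn : 2 ≤ n) (hlt : ∀ s ∈ S, 1 ≤ s ∧ s ≤ n / 2)
    (hS2 : ∀ s ∈ S, 2 * s ≠ n) (j : ℕ) :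
    FT n S ((j : ZMod n)) = ∑ s ∈ S, (om n ^ (j * s) + om n ^ (j * (n - s))) := by
  classical
  have hltn : ∀ s ∈ S, s < n := fun s hs =>
    lt_of_le_of_lt (hlt s hs).2 (Nat.div_lt_self (by omega) one_lt_two)
  have hdisj : Disjoint (S.image (fun s : ℕ => (s : ZMod n)))
      (S.image (fun s : ℕ => -(s : ZMod n))) := by
    rw [Finset.disjoint_iff_inter_eq_empty, inter_eq S hn hlt, if_neg]
    rintro ⟨h1, h2⟩
    exact hS2 _ h1 (by omega)
  rw [FT_eq_sum_T, filter_eq_union S hltn, Finset.sum_union hdisj,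
    sum_image_cast S hltn, sum_image_negcast S hltn, ← Finset.sum_add_distrib]
  refine Finset.sum_congr rfl fun s hs => ?_
  have hsle : s ≤ n := le_of_lt (hltn s hs)
  have e1 : -((s : ZMod n) * (j : ZMod n)) = (((j * (n - s) : ℕ)) : ZMod n) := by
    push_cast [Nat.cast_sub hsle]
    rw [ZMod.natCast_self]
    ring
  have e2 : -((-(s : ZMod n)) * (j : ZMod n)) = (((j * s : ℕ)) : ZMod n) := by
    push_cast
    ring
  rw [e1, e2, psi_nat, psi_nat]
  ring

lemma parity_sum (S : Finset ℕ) :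
    ∑ s ∈ S, (-1 : ℚ) ^ s =
      ((S.filter (fun s => s % 2 = 0)).card : ℚ) - ((S.filter (fun s => s % 2 = 1)).card : ℚ) := by
  classical
  rw [← Finset.sum_filter_add_sum_filter_not S (fun s => s % 2 = 0)]
  have h1 : ∀ s ∈ S.filter (fun s => s % 2 = 0), (-1 : ℚ) ^ s = 1 := by
    intro s hs
    exact Even.neg_one_pow (Nat.even_iff.2 (Finset.mem_filter.1 hs).2)
  have h2 : ∀ s ∈ S.filter (fun s => ¬ s % 2 = 0), (-1 : ℚ) ^ s = -1 := by
    intro s hs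
    refine Odd.neg_one_pow (Nat.odd_iff.2 ?_)
    have := (Finset.mem_filter.1 hs).2
    omega
  rw [Finset.sum_congr rfl h1, Finset.sum_congr rfl h2]
  have h3 : S.filter (fun s => ¬ s % 2 = 0) = S.filter (fun s => s % 2 = 1) := by
    apply Finset.filter_congr
    intro s _
    omega
  rw [h3]
  simp only [Finset.sum_const, nsmul_eq_mul, mul_one, mul_neg_one]
  ring

lemma neg_one_pow_sub (s : ℕ) (hs : s ≤ n) (hev : 2 * (n / 2) = n) :
    (-1 : ℚ) ^ (n - s) = (-1 : ℚ) ^ s := by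
  have hn2 : Even n := ⟨n / 2, by omega⟩
  rcases Nat.even_or_odd s with h | h
  · rw [Even.neg_one_pow h, Even.neg_one_pow ((Nat.even_sub hs).2 (by simp [hn2, h]))]
  · rw [Odd.neg_one_pow h, Odd.neg_one_pow ?_]
    rw [Nat.odd_iff]
    have h1 := Nat.even_iff.1 hn2
    have h2 := Nat.odd_iff.1 h
    omega

lemma altQ_eq (S : Finset ℕ) (hn : 2 ≤ n) (hlt : ∀ s ∈ S, 1 ≤ s ∧ s ≤ n / 2)
    (hev : 2 * (n / 2) = n) :
    ∑ m : ZMod n, cf n S m * (-1 : ℚ) ^ m.val =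
      2 * (((S.filter (fun s => s % 2 = 0)).card : ℚ) - ((S.filter (fun s => s % 2 = 1)).card : ℚ))
        - (if n / 2 ∈ S then (-1 : ℚ) ^ (n / 2) else 0) := by
  classical
  have hltn : ∀ s ∈ S, s < n := fun s hs =>
    lt_of_le_of_lt (hlt s hs).2 (Nat.div_lt_self (by omega) one_lt_two)
  set A := S.image (fun s : ℕ => (s : ZMod n)) with hA
  set B := S.image (fun s : ℕ => -(s : ZMod n)) with hB
  have h1 : ∑ m : ZMod n, cf n S m * (-1 : ℚ) ^ m.val = ∑ m ∈ A ∪ B, (-1 : ℚ) ^ m.val := by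
    rw [← filter_eq_union S hltn, Finset.sum_filter]
    refine Finset.sum_congr rfl fun m _ => ?_
    simp only [cf]
    split_ifs <;> ring
  have hui : ((∑ m ∈ A ∪ B, (-1 : ℚ) ^ m.val) + ∑ m ∈ A ∩ B, (-1 : ℚ) ^ m.val) =
      ((∑ m ∈ A, (-1 : ℚ) ^ m.val) + ∑ m ∈ B, (-1 : ℚ) ^ m.val) :=
    Finset.sum_union_inter
  have h2 : ∑ m ∈ A, (-1 : ℚ) ^ m.val = ∑ s ∈ S, (-1 : ℚ) ^ s := by
    rw [hA, sum_image_cast S hltn]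
    exact Finset.sum_congr rfl fun s hs => by rw [ZMod.val_natCast_of_lt (hltn s hs)]
  have h3 : ∑ m ∈ B, (-1 : ℚ) ^ m.val = ∑ s ∈ S, (-1 : ℚ) ^ s := by
    rw [hB, sum_image_negcast S hltn]
    refine Finset.sum_congr rfl fun s hs => ?_
    have hne : ((s : ZMod n)) ≠ 0 := by
      intro h
      have h' := congrArg ZMod.val h
      rw [ZMod.val_natCast_of_lt (hltn s hs), ZMod.val_zero] at h'
      exact absurd h' (by have := (hlt s hs).1; omega)
    rw [ZMod.neg_val, if_neg hne, ZMod.val_natCast_of_lt (hltn s hs)]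
    exact neg_one_pow_sub s (le_of_lt (hltn s hs)) hev
  have h4 : ∑ m ∈ A ∩ B, (-1 : ℚ) ^ m.val = (if n / 2 ∈ S then (-1 : ℚ) ^ (n / 2) else 0) := by
    rw [hA, hB, inter_eq S hn hlt]
    by_cases hh : n / 2 ∈ S
    · rw [if_pos ⟨hh, hev⟩, if_pos hh, Finset.sum_singleton,
        ZMod.val_natCast_of_lt (Nat.div_lt_self (by omega) one_lt_two)]
    · rw [if_neg (fun hc => hh hc.1), if_neg hh, Finset.sum_empty]
  have hP := parity_sum S
  rw [h2, h3, h4, hP] at hui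
  rw [h1]
  linarith



lemma linindep_cast {ι : Type*} [Fintype ι] (v : ι → (ZMod n → ℚ))
    (hv : LinearIndependent ℚ v) :
    LinearIndependent ℂ (fun i => (fun z => ((v i z : ℚ) : ℂ))) := by
  classical
  set M : Matrix ι (ZMod n) ℚ := Matrix.of v with hM
  set G : Matrix ι ι ℚ := M * Mᵀ with hG
  have hGdet : G.det ≠ 0 := by
    intro hdet
    obtain ⟨b, hb0, hGb⟩ := (Matrix.exists_mulVec_eq_zero_iff).2 hdet
    have hw : (b ᵥ* M) ⬝ᵥ (b ᵥ* M) = 0 := by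
      have h1 : b ⬝ᵥ (G *ᵥ b) = (b ᵥ* M) ⬝ᵥ (b ᵥ* M) := by
        rw [hG, ← Matrix.mulVec_mulVec, Matrix.dotProduct_mulVec b M,
          Matrix.mulVec_transpose]
      rw [← h1, hGb, dotProduct_zero]
    have hw0 : b ᵥ* M = 0 := dotProduct_self_eq_zero.1 hw
    have hsum : ∑ i, b i • v i = 0 := by
      funext z
      have := congrFun hw0 z
      simpa [Matrix.vecMul, dotProduct, hM, Finset.sum_apply] using this
    exact hb0 (funext (Fintype.linearIndependent_iff.1 hv b hsum))
  rw [Fintype.linearIndependent_iff]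
  intro a ha
  set GC : Matrix ι ι ℂ := G.map (Rat.cast : ℚ → ℂ) with hGC
  have hGCdet : GC.det ≠ 0 := by
    have h := RingHom.map_det (Rat.castHom ℂ) G
    have h2 : (Rat.castHom ℂ) G.det = GC.det := by rw [h]; rfl
    intro h0
    exact hGdet ((Rat.castHom ℂ).injective (by rw [h2, h0, map_zero]))
  have hav : GCᵀ *ᵥ a = 0 := by
    funext jj
    rw [Matrix.mulVec_transpose]
    have h0 : ∀ z, (∑ i, a i * ((v i z : ℚ) : ℂ)) = 0 := by
      intro z
      have := congrFun ha z
      simpa [Finset.sum_apply] using this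
    have : (a ᵥ* GC) jj = ∑ z, (∑ i, a i * ((v i z : ℚ) : ℂ)) * ((v jj z : ℚ) : ℂ) := by
      simp only [Matrix.vecMul, dotProduct, hGC, hG, Matrix.map_apply, Matrix.mul_apply,
        hM, Matrix.transpose_apply, Matrix.of_apply]
      push_cast
      simp only [Finset.mul_sum, Finset.sum_mul]
      rw [Finset.sum_comm]
      exact Finset.sum_congr rfl fun z _ => Finset.sum_congr rfl fun i _ => by ring
    rw [this]
    simp only [h0, zero_mul, Finset.sum_const_zero, Pi.zero_apply]
  intro i
  by_contra hai
  have hane : a ≠ 0 := fun h => hai (by rw [h]; rfl)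
  have : GCᵀ.det = 0 := Matrix.exists_mulVec_eq_zero_iff.1 ⟨a, hane, hav⟩
  rw [Matrix.det_transpose] at this
  exact hGCdet this

lemma rank_cast_le (M : Matrix (ZMod n) (ZMod n) ℚ) :
    M.rank ≤ (M.map (Rat.cast : ℚ → ℂ)).rank := by
  classical
  let R := LinearMap.range M.mulVecLin
  have hfr : M.rank = Module.finrank ℚ R := rfl
  let b := Module.finBasis ℚ R
  let w : Fin (Module.finrank ℚ R) → (ZMod n → ℚ) := fun i => (b i : ZMod n → ℚ)
  have hw : LinearIndependent ℚ w :=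
    b.linearIndependent.map' R.subtype (Submodule.ker_subtype R)
  have hwC : LinearIndependent ℂ (fun i => (fun z => ((w i z : ℚ) : ℂ))) := linindep_cast w hw
  have hmem : ∀ i, (fun z => ((w i z : ℚ) : ℂ)) ∈ LinearMap.range (M.map (Rat.cast : ℚ → ℂ)).mulVecLin := by
    intro i
    obtain ⟨x, hx⟩ := (b i).2
    refine ⟨fun z => ((x z : ℚ) : ℂ), ?_⟩
    rw [Matrix.mulVecLin_apply]
    funext z
    have h1 := (RingHom.map_mulVec (Rat.castHom ℂ) M x z).symm
    simp only [Matrix.mulVecLin_apply] at hx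
    rw [show M.map ⇑(Rat.castHom ℂ) = M.map (Rat.cast : ℚ → ℂ) from rfl] at h1
    rw [show ((Rat.castHom ℂ) ∘ x) = (fun z => ((x z : ℚ) : ℂ)) from rfl] at h1
    rw [h1, hx]
    rfl
  let g : Fin (Module.finrank ℚ R) → ↥(LinearMap.range (M.map (Rat.cast : ℚ → ℂ)).mulVecLin) :=
    fun i => ⟨_, hmem i⟩
  have hg : LinearIndependent ℂ g := by
    apply LinearIndependent.of_comp (LinearMap.range (M.map (Rat.cast : ℚ → ℂ)).mulVecLin).subtype
    exact hwC
  have := hg.fintype_card_le_finrank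
  simpa [hfr, Matrix.rank] using this

lemma nullity_add_rank {K : Type*} [Field K] (M : Matrix (ZMod n) (ZMod n) K) :
    M.rank + Module.finrank K (LinearMap.ker M.mulVecLin) = n := by
  have h := LinearMap.finrank_range_add_finrank_ker M.mulVecLin
  rw [Module.finrank_fintype_fun_eq_card, ZMod.card] at h
  exact h

end CircNutAux


open CircNutAux Matrix

/-- Characterization of circulant nut graphs (Damnjanović–Stevanović): `Circ(n, S)` with `n ≥ 2`
and nonempty `S ⊆ {1, …, ⌊n/2⌋}` is a nut graph iff `n` is even, `S` consists of `t` odd and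
`t` even integers from `{1, …, n/2 − 1}` for some `t ≥ 1`, and `P(ω^j) ≠ 0` for
`j = 1, …, n/2 − 1`, where `ω = e^{2πi/n}` and `P(x) = Σ_{s ∈ S} (x^s + x^{n−s})`. -/
theorem circulant_nut_graph_characterization (n : ℕ) [NeZero n] (hn : 2 ≤ n)
    (S : Finset ℕ) (hSne : S.Nonempty) (hSsub : S ⊆ Finset.Icc 1 (n / 2)) :
    IsNutGraph (circulantGraph n S) ↔
      (Even n ∧
        (∃ t : ℕ, 1 ≤ t ∧ (∀ s ∈ S, 1 ≤ s ∧ s ≤ n / 2 - 1) ∧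
          (S.filter fun s => s % 2 = 1).card = t ∧ (S.filter fun s => s % 2 = 0).card = t) ∧
        (∀ j : ℕ, 1 ≤ j → j ≤ n / 2 - 1 →
          (∑ s ∈ S, ((Complex.exp (2 * (Real.pi : ℂ) * Complex.I / (n : ℂ))) ^ (j * s) +
            (Complex.exp (2 * (Real.pi : ℂ) * Complex.I / (n : ℂ))) ^ (j * (n - s)))) ≠ 0)) := by
  classical
  have hn0 : n ≠ 0 := NeZero.ne n
  have h0S : 0 ∉ S := fun h => by
    have := Finset.mem_Icc.1 (hSsub h)
    omega
  have hlt : ∀ s ∈ S, 1 ≤ s ∧ s ≤ n / 2 := fun s hs => Finset.mem_Icc.1 (hSsub hs)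
  have hltn : ∀ s ∈ S, s < n := fun s hs =>
    lt_of_le_of_lt (hlt s hs).2 (Nat.div_lt_self (by omega) one_lt_two)
  set κ : ZMod n := (((n / 2 : ℕ)) : ZMod n) with hκ
  set A := adjMatrixQ (circulantGraph n S) with hA
  constructor
  · rintro ⟨-, hrk, x, hx, hxne⟩
    have hxker : x ∈ LinearMap.ker A.mulVecLin := by
      rw [LinearMap.mem_ker, Matrix.mulVecLin_apply]
      exact hx
    have hx0 : x ≠ 0 := fun h => hxne 0 (by rw [h]; rfl)
    have hkers : (Submodule.span ℚ {x}) = LinearMap.ker A.mulVecLin := by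
      apply Submodule.eq_of_le_of_finrank_le
      · rwa [Submodule.span_singleton_le_iff_mem]
      · rw [hrk, finrank_span_singleton hx0]
    have hy : A *ᵥ (fun i => x (i + 1)) = 0 := by
      funext i
      have h1 := congrFun hx (i + 1)
      rw [Pi.zero_apply] at h1 ⊢
      rw [hA, mulVec_eq S h0S]
      rw [mulVec_eq S h0S] at h1
      rw [← h1]
      refine Fintype.sum_equiv (Equiv.addRight 1) _ _ fun j => ?_
      simp only [Equiv.coe_addRight]
      have e1 : i + 1 - (j + 1) = i - j := by ring
      rw [e1]
    have hymem : (fun i => x (i + 1)) ∈ Submodule.span ℚ {x} := by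
      rw [hkers, LinearMap.mem_ker, Matrix.mulVecLin_apply]
      exact hy
    obtain ⟨q, hq⟩ := Submodule.mem_span_singleton.1 hymem
    have hrec : ∀ i, x (i + 1) = q * x i := by
      intro i
      have := congrFun hq i
      rw [Pi.smul_apply, smul_eq_mul] at this
      exact this.symm
    have hpow : ∀ (m : ℕ) (i : ZMod n), x (i + (m : ZMod n)) = q ^ m * x i := by
      intro m
      induction m with
      | zero => intro i; simp
      | succ m ih =>
        intro i
        have e1 : ((m + 1 : ℕ) : ZMod n) = ((m : ℕ) : ZMod n) + 1 := by push_cast; ring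
        rw [e1, ← add_assoc, hrec (i + (m : ZMod n)), ih i]
        ring
    have hqn : q ^ n = 1 := by
      have h1 := hpow n 0
      rw [ZMod.natCast_self, add_zero] at h1
      have h2 : (q ^ n - 1) * x 0 = 0 := by linear_combination -h1
      rcases mul_eq_zero.1 h2 with h | h
      · exact sub_eq_zero.1 h
      · exact absurd h (hxne 0)
    have habs : q = 1 ∨ q = -1 := by
      have h1 : |q| ^ n = 1 := by rw [← abs_pow, hqn, abs_one]
      have h2 : |q| = 1 := by
        by_contra hne
        rcases lt_or_gt_of_ne hne with h | h
        · have := pow_lt_one₀ (abs_nonneg q) h hn0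
          rw [h1] at this
          exact lt_irrefl _ this
        · have := one_lt_pow₀ h hn0
          rw [h1] at this
          exact lt_irrefl _ this
      exact (abs_eq (by norm_num : (0:ℚ) ≤ 1)).1 h2
    have hxi : ∀ i : ZMod n, x i = q ^ i.val * x 0 := by
      intro i
      have := hpow i.val 0
      rwa [zero_add, ZMod.natCast_rightInverse i] at this
    have hq1 : q ≠ 1 := by
      intro hq1
      have hxc : ∀ i : ZMod n, x i = x 0 := fun i => by
        rw [hxi i, hq1, one_pow, one_mul]
      have hker1 := (ker_iff S h0S x).1 hx 0
      have hF0 := FT_zero_ne S hSne hltn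
      have hdx : ZMod.dft (castC x) 0 = (n : ℂ) * ((x 0 : ℚ) : ℂ) := by
        rw [ZMod.dft_apply_zero]
        have hco : ∀ j : ZMod n, castC x j = ((x 0 : ℚ) : ℂ) := fun j => by
          rw [castC, hxc j]
        rw [Finset.sum_congr rfl (fun j _ => hco j)]
        simp [Finset.card_univ, ZMod.card, mul_comm]
      rw [hdx] at hker1
      rcases mul_eq_zero.1 hker1 with h | h
      · exact hF0 h
      · rcases mul_eq_zero.1 h with h' | h'
        · exact (Nat.cast_ne_zero.2 hn0 : (n:ℂ) ≠ 0) h'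
        · exact hxne 0 (by exact_mod_cast h')
    have hqm1 : q = -1 := habs.resolve_left hq1
    have hEven : Even n := by
      by_contra hodd
      rw [hqm1, Odd.neg_one_pow (Nat.odd_iff.2 (by
        have := Nat.even_iff.not.1 hodd
        omega))] at hqn
      norm_num at hqn
    have hev2 : 2 * (n / 2) = n := by
      rcases hEven with ⟨c, hc⟩
      omega
    set u : ZMod n → ℚ := fun i => (-1 : ℚ) ^ i.val with hu
    have hxu : ∀ i, x i = x 0 * u i := fun i => by
      rw [hxi i, hqm1, hu]
      ring
    have huker : A *ᵥ u = 0 := by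
      have hxs : x = x 0 • u := funext fun i => by
        rw [hxu i]
        rfl
      have h1 := hx
      rw [hxs, Matrix.mulVec_smul] at h1
      exact (smul_eq_zero.1 h1).resolve_left (hxne 0)
    have hucast : castC u = chi n κ := by
      funext i
      rw [castC, hu, hκ, chi_kappa hev2]
      push_cast
      rfl
    have hFκ : FT n S κ = 0 := by
      have h1 := (ker_iff S h0S u).1 huker κ
      rw [hucast, dft_chi] at h1
      simp only [if_pos rfl] at h1
      rcases mul_eq_zero.1 h1 with h | h
      · exact h
      · exact absurd h (Nat.cast_ne_zero.2 hn0)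
    have haltQ : ∑ m : ZMod n, cf n S m * (-1:ℚ) ^ m.val = 0 := by
      have h1 := FT_kappa (n := n) S hev2
      rw [← hκ, hFκ] at h1
      exact_mod_cast h1.symm
    have halt2 := altQ_eq S hn hlt hev2
    rw [haltQ] at halt2
    set E := (S.filter (fun s => s % 2 = 0)).card with hE
    set O := (S.filter (fun s => s % 2 = 1)).card with hO
    have hhalfS : n / 2 ∉ S := by
      intro hh
      rw [if_pos hh] at halt2
      rcases Nat.even_or_odd (n / 2) with hp | hp
      · rw [Even.neg_one_pow hp] at halt2
        have hc1 : ((2 * E : ℤ) : ℚ) = ((2 * O + 1 : ℤ) : ℚ) := by push_cast; linarith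
        have hc2 : (2 * E : ℤ) = (2 * O + 1 : ℤ) := by exact_mod_cast hc1
        omega
      · rw [Odd.neg_one_pow hp] at halt2
        have hc1 : ((2 * E + 1 : ℤ) : ℚ) = ((2 * O : ℤ) : ℚ) := by push_cast; linarith
        have hc2 : (2 * E + 1 : ℤ) = (2 * O : ℤ) := by exact_mod_cast hc1
        omega
    rw [if_neg hhalfS] at halt2
    have hcards : E = O := by
      have hc1 : ((E : ℤ) : ℚ) = ((O : ℤ) : ℚ) := by push_cast; linarith
      exact_mod_cast hc1
    have hbd : ∀ s ∈ S, 1 ≤ s ∧ s ≤ n / 2 - 1 := by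
      intro s hs
      refine ⟨(hlt s hs).1, ?_⟩
      have h1 := (hlt s hs).2
      have h2 : s ≠ n / 2 := fun h => hhalfS (h ▸ hs)
      omega
    have ht1 : 1 ≤ O := by
      obtain ⟨s₀, hs₀⟩ := hSne
      rcases Nat.even_or_odd s₀ with hp | hp
      · have hm : s₀ ∈ S.filter (fun s => s % 2 = 0) :=
          Finset.mem_filter.2 ⟨hs₀, Nat.even_iff.1 hp⟩
        have := Finset.card_pos.2 ⟨s₀, hm⟩
        omega
      · have hm : s₀ ∈ S.filter (fun s => s % 2 = 1) :=
          Finset.mem_filter.2 ⟨hs₀, Nat.odd_iff.1 hp⟩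
        have := Finset.card_pos.2 ⟨s₀, hm⟩
        omega
    have hS2 : ∀ s ∈ S, 2 * s ≠ n := by
      intro s hs h2s
      have := (hbd s hs).2
      omega
    refine ⟨hEven, ⟨O, ht1, hbd, rfl, hcards⟩, ?_⟩
    intro j hj1 hj2 hzero
    have hzero' : FT n S ((j : ZMod n)) = 0 := by
      rw [FT_apply_nat S hn hlt hS2 j]
      exact hzero
    set k : ZMod n := ((j : ℕ) : ZMod n) with hk
    have hjn : j < n := by omega
    have hkκ : k ≠ κ := by
      intro h
      have h2 := congrArg ZMod.val h
      rw [hk, hκ, ZMod.val_natCast_of_lt hjn,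
        ZMod.val_natCast_of_lt (Nat.div_lt_self (by omega) one_lt_two)] at h2
      omega
    set B := A.map (Rat.cast : ℚ → ℂ) with hB
    have hχk : B *ᵥ chi n k = 0 := by
      rw [hB, hA]
      exact chi_ker S h0S k hzero'
    have hχκ : B *ᵥ chi n κ = 0 := by
      rw [hB, hA]
      exact chi_ker S h0S κ hFκ
    have hmem1 : chi n κ ∈ LinearMap.ker B.mulVecLin := by
      rw [LinearMap.mem_ker, Matrix.mulVecLin_apply]
      exact hχκ
    have hmem2 : chi n k ∈ LinearMap.ker B.mulVecLin := by
      rw [LinearMap.mem_ker, Matrix.mulVecLin_apply]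
      exact hχk
    have hpair : LinearIndependent ℂ ![chi n κ, chi n k] := by
      rw [LinearIndependent.pair_iff]
      intro s t hst
      have hft : s • ZMod.dft (chi n κ) + t • ZMod.dft (chi n k) = 0 := by
        have h := congrArg (fun y => ZMod.dft y) hst
        simpa only [map_add, _root_.map_smul, map_zero] using h
      have e1 := congrFun hft κ
      have e2 := congrFun hft k
      rw [Pi.add_apply, Pi.smul_apply, Pi.smul_apply, dft_chi, dft_chi] at e1 e2
      simp only [if_pos rfl, if_neg hkκ, if_neg (Ne.symm hkκ), smul_eq_mul,
        mul_zero, add_zero, zero_add] at e1 e2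
      have hnne : (n : ℂ) ≠ 0 := Nat.cast_ne_zero.2 hn0
      constructor
      · rcases mul_eq_zero.1 e1 with h | h
        · exact h
        · exact absurd h hnne
      · rcases mul_eq_zero.1 e2 with h | h
        · exact h
        · exact absurd h hnne
    let g : Fin 2 → ↥(LinearMap.ker B.mulVecLin) := ![⟨chi n κ, hmem1⟩, ⟨chi n k, hmem2⟩]
    have hcomp : ((LinearMap.ker B.mulVecLin).subtype) ∘ g = ![chi n κ, chi n k] := by
      funext i
      fin_cases i <;> rfl
    have hg : LinearIndependent ℂ g :=
      LinearIndependent.of_comp _ (by rw [hcomp]; exact hpair)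
    have h2le := hg.fintype_card_le_finrank
    rw [Fintype.card_fin] at h2le
    have hQ := nullity_add_rank (K := ℚ) A
    rw [hrk] at hQ
    have hle := rank_cast_le A
    have hC := nullity_add_rank (K := ℂ) B
    rw [← hB] at hle
    omega
  · rintro ⟨hEven, ⟨t, ht1, hbd, hOc, hEc⟩, hP⟩
    have hev2 : 2 * (n / 2) = n := by
      rcases hEven with ⟨c, hc⟩
      omega
    have hhalfS : n / 2 ∉ S := by
      intro hh
      have := (hbd _ hh).2
      omega
    have hS2 : ∀ s ∈ S, 2 * s ≠ n := by
      intro s hs h2s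
      have := (hbd s hs).2
      omega
    have haltQ : ∑ m : ZMod n, cf n S m * (-1:ℚ) ^ m.val = 0 := by
      rw [altQ_eq S hn hlt hev2, if_neg hhalfS, hOc, hEc]
      ring
    have hFκ : FT n S κ = 0 := by
      rw [hκ, FT_kappa S hev2, haltQ]
      norm_num
    have hFne : ∀ k : ZMod n, k ≠ κ → FT n S k ≠ 0 := by
      intro k hk
      by_cases hk0 : k = 0
      · subst hk0
        exact FT_zero_ne S hSne hltn
      · have hval : k = ((k.val : ℕ) : ZMod n) := (ZMod.natCast_rightInverse k).symm
        have hv1 : 1 ≤ k.val := by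
          rcases Nat.eq_zero_or_pos k.val with h | h
          · exact absurd (by rw [hval, h]; simp : k = 0) hk0
          · exact h
        have hvn : k.val < n := ZMod.val_lt k
        have hvκ : k.val ≠ n / 2 := fun h => hk (by rw [hval, h, ← hκ])
        rcases lt_or_gt_of_ne hvκ with h | h
        · rw [hval, FT_apply_nat S hn hlt hS2 k.val]
          exact hP k.val hv1 (by omega)
        · have hneg : -k = (((n - k.val : ℕ)) : ZMod n) := by
            nth_rewrite 1 [hval]
            push_cast [Nat.cast_sub (le_of_lt hvn)]
            rw [ZMod.natCast_self]
            ring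
          rw [← FT_neg S k, hneg, FT_apply_nat S hn hlt hS2 (n - k.val)]
          exact hP (n - k.val) (by omega) (by omega)
    set u : ZMod n → ℚ := fun i => (-1:ℚ) ^ i.val with hu
    have hucast : castC u = chi n κ := by
      funext i
      rw [castC, hu, hκ, chi_kappa hev2]
      push_cast
      rfl
    have huker : A *ᵥ u = 0 := by
      rw [hA, ker_iff S h0S]
      intro k
      by_cases hk : k = κ
      · subst hk
        rw [hFκ]
        ring
      · rw [hucast, dft_chi]
        simp [hk]
    have hker_le : LinearMap.ker A.mulVecLin ≤ Submodule.span ℚ {u} := by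
      intro x hxk
      rw [LinearMap.mem_ker, Matrix.mulVecLin_apply] at hxk
      have hFx := (ker_iff S h0S x).1 (by rw [← hA]; exact hxk)
      have hvanish : ∀ k : ZMod n, k ≠ κ → ZMod.dft (castC x) k = 0 := by
        intro k hk
        rcases mul_eq_zero.1 (hFx k) with h | h
        · exact absurd h (hFne k hk)
        · exact h
      have hXC : ZMod.dft (castC x) = ZMod.dft ((ZMod.dft (castC x) κ / n) • chi n κ) := by
        funext k
        rw [_root_.map_smul, Pi.smul_apply, dft_chi]
        dsimp only
        by_cases hk : k = κ
        · subst hk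
          rw [if_pos rfl, smul_eq_mul]
          field_simp
        · rw [if_neg hk, hvanish k hk, smul_zero]
      have hxc : castC x = (ZMod.dft (castC x) κ / n) • chi n κ :=
        (ZMod.dft (N := n)).injective hXC
      have hchi0 : chi n κ 0 = 1 := by
        rw [chi, mul_zero]
        exact AddChar.map_zero_eq_one _
      have hconst : (ZMod.dft (castC x) κ / n) = ((x 0 : ℚ) : ℂ) := by
        have h := congrFun hxc 0
        rw [Pi.smul_apply, hchi0, smul_eq_mul, mul_one] at h
        exact h.symm
      have hxeq : x = x 0 • u := by
        funext i
        have h := congrFun hxc i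
        rw [Pi.smul_apply, hconst, smul_eq_mul] at h
        have h2 : chi n κ i = ((u i : ℚ) : ℂ) := (congrFun hucast i).symm
        rw [h2] at h
        have h3 : ((x i : ℚ) : ℂ) = (((x 0 * u i : ℚ)) : ℂ) := by
          push_cast
          exact h
        have h4 : x i = x 0 * u i := by exact_mod_cast h3
        rw [h4]
        rfl
      rw [hxeq]
      exact Submodule.smul_mem _ _ (Submodule.mem_span_singleton_self u)
    have hu0 : u ≠ 0 := by
      intro h
      have h1 := congrFun h 0
      rw [hu] at h1
      simp [ZMod.val_zero] at h1
    have hkereq : LinearMap.ker A.mulVecLin = Submodule.span ℚ {u} :=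
      le_antisymm hker_le ((Submodule.span_singleton_le_iff_mem u _).2
        (by rw [LinearMap.mem_ker, Matrix.mulVecLin_apply]; exact huker))
    refine ⟨⟨0⟩, ?_, u, huker, fun i => pow_ne_zero _ (by norm_num)⟩
    rw [← hA, hkereq]
    exact finrank_span_singleton hu0
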